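/- Fix N ∈ ℕ and for i = 1,…,N let δ_i ∈ {0,1}, q_i > 0, y_i ∈ ℝ and z̃_i ∈ ℝ^m. Assume A = Σ_{i=1}^N δ_i q_i z̃_i z̃_iᵀ is invertible, and set t = Σ_{i=1}^N z̃_i, ω̃_i = q_i z̃_iᵀ A^{-1} t, and γ̂ = A^{-1} Σ_{i=1}^N δ_i q_i z̃_i y_i. Then Σ_{i=1}^N δ_i ω̃_i y_i = Σ_{i=1}^N z̃_iᵀ γ̂; that is, the calibration-weighted estimator N^{-1} Σ δ_i ω̃_i y_i coincides with the augmented regression prediction estimator N^{-1} Σ z̃_iᵀ γ̂. -/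
import Mathlib


open Matrix Finset

lemma sum_dot {N m : ℕ} (v : Fin N → Fin m → ℝ) (w : Fin m → ℝ) :
    (∑ i, v i) ⬝ᵥ w = ∑ i, v i ⬝ᵥ w := by
  simp only [dotProduct, Finset.sum_apply, Finset.sum_mul]
  exact Finset.sum_comm

lemma symm_aux {m : ℕ} (A : Matrix (Fin m) (Fin m) ℝ) (hAT : Aᵀ = A)
    (s t : Fin m → ℝ) : s ⬝ᵥ (A⁻¹ *ᵥ t) = t ⬝ᵥ (A⁻¹ *ᵥ s) := by
  have hT : (A⁻¹)ᵀ = A⁻¹ := by rw [Matrix.transpose_nonsing_inv, hAT]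
  rw [Matrix.dotProduct_mulVec, ← hT, Matrix.vecMul_transpose, dotProduct_comm, hT]

/-- The calibration-weighted estimator with the minimum-weighted-squared-norm
weights coincides with the augmented regression prediction estimator. -/
theorem stmt_2 (N m : ℕ) (δ q y : Fin N → ℝ)
    (hδ : ∀ i, δ i = 0 ∨ δ i = 1) (hq : ∀ i, 0 < q i)
    (z : Fin N → Fin m → ℝ)
    (A : Matrix (Fin m) (Fin m) ℝ)
    (hA : A = ∑ i, (δ i * q i) • vecMulVec (z i) (z i))
    (hAinv : IsUnit A)
    (t : Fin m → ℝ) (ht : t = ∑ i, z i)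
    (ωt : Fin N → ℝ) (hωt : ∀ i, ωt i = q i * (z i ⬝ᵥ (A⁻¹ *ᵥ t)))
    (γ : Fin m → ℝ) (hγ : γ = A⁻¹ *ᵥ ∑ i, (δ i * q i * y i) • z i) :
    ∑ i, δ i * ωt i * y i = ∑ i, z i ⬝ᵥ γ := by
  have hAT : Aᵀ = A := by
    ext i j
    simp only [hA, Matrix.transpose_apply, Matrix.sum_apply, Matrix.vecMulVec_apply,
      Matrix.smul_apply, smul_eq_mul]
    exact Finset.sum_congr rfl fun k _ => by ring
  set s : Fin m → ℝ := ∑ i, (δ i * q i * y i) • z i with hs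
  have lhs : ∑ i, δ i * ωt i * y i = s ⬝ᵥ (A⁻¹ *ᵥ t) := by
    rw [hs, sum_dot]
    refine Finset.sum_congr rfl fun i _ => ?_
    rw [hωt i]
    simp [smul_eq_mul, smul_dotProduct]
    ring
  have rhs : ∑ i, z i ⬝ᵥ γ = t ⬝ᵥ (A⁻¹ *ᵥ s) := by
    rw [hγ, ht, sum_dot]
  rw [lhs, rhs, symm_aux A hAT]
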